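/- Let v ∈ [0,1) and u ∈ [0,1] with u ≠ β(v). Then for every t ≥ 0 the denominator 1 − ((α(v) − u)/(β(v) − u))·e^{(α(v) − β(v))·b·q·t} is nonzero, and the function y(t) = β(v) + (α(v) − β(v)) / (1 − ((α(v) − u)/(β(v) − u))·e^{(α(v) − β(v))·b·q·t}) satisfies y(0) = u and y'(t) = b·(p·v − y(t) + q·y(t)²) for all t ≥ 0. -/

import Mathlib

set_option maxHeartbeats 1000000


/-- Let `v ∈ [0,1)`, `u ∈ [0,1]` with `u ≠ β(v)`. Then for every `t ≥ 0` the
denominator `1 − ((α(v)−u)/(β(v)−u))·e^{(α(v)−β(v))bqt}` is nonzero, and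
`y(t) = β(v) + (α(v)−β(v)) / (1 − ((α(v)−u)/(β(v)−u))·e^{(α(v)−β(v))bqt})` satisfies
`y(0) = u` and `y'(t) = b(pv − y(t) + qy(t)²)` for all `t ≥ 0`. -/
theorem stmt_10
    (b p q : ℝ) (hb : 0 < b) (hp : p ∈ Set.Ioo (0 : ℝ) 1) (hq : q = 1 - p)
    (v : ℝ) (hv : v ∈ Set.Ico (0 : ℝ) 1)
    (u : ℝ) (hu : u ∈ Set.Icc (0 : ℝ) 1)
    (α β : ℝ)
    (hα : α = (1 + Real.sqrt (1 - 4 * p * q * v)) / (2 * q))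
    (hβ : β = (1 - Real.sqrt (1 - 4 * p * q * v)) / (2 * q))
    (huβ : u ≠ β)
    (y : ℝ → ℝ)
    (hy : ∀ t : ℝ, y t = β + (α - β) /
      (1 - ((α - u) / (β - u)) * Real.exp ((α - β) * b * q * t))) :
    (∀ t : ℝ, 0 ≤ t →
      1 - ((α - u) / (β - u)) * Real.exp ((α - β) * b * q * t) ≠ 0) ∧
    y 0 = u ∧
    (∀ t : ℝ, 0 ≤ t → HasDerivAt y (b * (p * v - y t + q * (y t) ^ 2)) t) := by
  obtain ⟨hp0, hp1⟩ := hp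
  obtain ⟨hv0, hv1⟩ := hv
  obtain ⟨hu0, hu1⟩ := hu
  have hq0 : 0 < q := by rw [hq]; linarith
  have h4 : 0 < 1 - 4*p*q*v := by
    nlinarith [sq_nonneg (2*p-1), mul_pos (mul_pos hp0 hq0) (show (0:ℝ) < 1 - v by linarith)]
  set s := Real.sqrt (1 - 4 * p * q * v) with hsdef
  have hs2 : s^2 = 1 - 4*p*q*v := Real.sq_sqrt h4.le
  have hs0 : 0 < s := Real.sqrt_pos.2 h4
  have hαβ : α - β = s / q := by rw [hα, hβ]; field_simp; ring
  have hαβ0 : 0 < α - β := by rw [hαβ]; positivity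
  have hs2q : 2*q - 1 < s := by
    nlinarith [hs2, hs0, mul_pos (mul_pos hp0 hq0) (show (0:ℝ) < 1 - v by linarith)]
  have hs2q' : 1 - 2*q < s := by
    nlinarith [hs2, hs0, mul_pos (mul_pos hp0 hq0) (show (0:ℝ) < 1 - v by linarith)]
  have hα1 : 1 < α := by rw [hα, lt_div_iff₀ (by linarith : (0:ℝ) < 2*q)]; linarith
  have hβ1 : β < 1 := by rw [hβ, div_lt_one (by linarith : (0:ℝ) < 2*q)]; linarith
  have hαu : 0 < α - u := by linarith
  have hβu : β - u ≠ 0 := sub_ne_zero.mpr (Ne.symm huβ)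
  have hsum : q*(α+β) = 1 := by rw [hα, hβ]; field_simp; ring
  have hprod : q*(α*β) = p*v := by
    rw [hα, hβ]
    field_simp
    linear_combination (-1)*hs2
  have key : ∀ Y : ℝ, b*(p*v - Y + q*Y^2) = b*q*((Y-α)*(Y-β)) := by
    intro Y; linear_combination b*Y*hsum - b*hprod
  have hden : ∀ t : ℝ, 0 ≤ t →
      1 - ((α - u) / (β - u)) * Real.exp ((α - β) * b * q * t) ≠ 0 := by
    intro t ht
    rcases (Ne.symm huβ).lt_or_gt with hlt | hgt
    · -- β < u
      have hbu : β - u < 0 := by linarith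
      have hc : (α-u)/(β-u) < 0 := div_neg_of_pos_of_neg hαu hbu
      have he : 0 < Real.exp ((α - β) * b * q * t) := Real.exp_pos _
      intro h; nlinarith [mul_neg_of_neg_of_pos hc he]
    · -- u < β
      have hbu : 0 < β - u := by linarith
      have hc : 1 < (α-u)/(β-u) := by rw [lt_div_iff₀ hbu]; linarith
      have he : 1 ≤ Real.exp ((α - β) * b * q * t) := Real.one_le_exp (by positivity)
      intro h; nlinarith
  have hba : β - α ≠ 0 := sub_ne_zero.mpr (by linarith)
  refine ⟨hden, ?_, ?_⟩
  · have h1 : 1 - (α-u)/(β-u) = (β-α)/(β-u) := by field_simp; ring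
    rw [hy 0, mul_zero, Real.exp_zero, mul_one, h1]
    field_simp
    ring
  · intro t ht
    have hD : 1 - ((α - u) / (β - u)) * Real.exp ((α - β) * b * q * t) ≠ 0 := hden t ht
    have hE : HasDerivAt (fun t : ℝ => Real.exp ((α - β) * b * q * t))
        (((α - β) * b * q) * Real.exp ((α - β) * b * q * t)) t := by
      simpa [mul_comm, mul_assoc, mul_left_comm] using
        ((hasDerivAt_id t).const_mul ((α - β) * b * q)).exp
    have hDder : HasDerivAt
        (fun t : ℝ => 1 - ((α - u) / (β - u)) * Real.exp ((α - β) * b * q * t))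
        (-(((α - u) / (β - u)) * (((α - β) * b * q) * Real.exp ((α - β) * b * q * t)))) t :=
      (hE.const_mul ((α - u) / (β - u))).const_sub 1
    have hyfun : y = fun t : ℝ => β + (α - β) /
        (1 - ((α - u) / (β - u)) * Real.exp ((α - β) * b * q * t)) := funext hy
    have hder : HasDerivAt y
        (b * q * (α - β)^2 * ((α - u) / (β - u)) * Real.exp ((α - β) * b * q * t) /
          (1 - ((α - u) / (β - u)) * Real.exp ((α - β) * b * q * t))^2) t := by
      rw [hyfun]
      refine (((hasDerivAt_const t (α - β)).div hDder hD).const_add β).congr_deriv ?_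
      ring
    have hval : b * (p * v - y t + q * (y t) ^ 2) =
        b * q * (α - β)^2 * ((α - u) / (β - u)) * Real.exp ((α - β) * b * q * t) /
          (1 - ((α - u) / (β - u)) * Real.exp ((α - β) * b * q * t))^2 := by
      rw [key (y t), hy t]
      generalize Real.exp ((α - β) * b * q * t) = E at hD ⊢
      have hW : β - u - (α - u) * E ≠ 0 := fun h => hD (by field_simp; linarith)
      rw [show 1 - (α - u) / (β - u) * E = (β - u - (α - u) * E) / (β - u) by
        field_simp]
      field_simp
      ring
    rw [hval]
    exact hder
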